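/- arXiv:2301.00793 — 3 statements merged into one kernel-verified Lean document; each statement's English description precedes it below -/
import Mathlib

section
/- Let C be a symmetric n×n real matrix all of whose eigenvalues lie in the interval [-1,1]. If the first k diagonal entries of C are each greater than or equal to 1, then the upper-left k×k block of C equals the k×k identity matrix. -/
open Matrix

lemma aux_entry_zero {n : ℕ} {M : Matrix (Fin n) (Fin n) ℝ} (hM : M.PosSemidef)
    {i : Fin n} (hii : M i i ≤ 0) (j : Fin n) : M i j = 0 := by
  obtain ⟨B, hB⟩ : ∃ B : Matrix (Fin n) (Fin n) ℝ, M = Bᴴ * B := by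
    open scoped MatrixOrder in
    obtain ⟨X, hX, -, hXX⟩ :=
      CFC.exists_sqrt_of_isSelfAdjoint_of_quasispectrumRestricts hM.isHermitian
        (QuasispectrumRestricts.nnreal_of_nonneg hM.nonneg)
    exact ⟨X, by rw [← hXX]; congr 1; exact hX.symm⟩
  have hcol : ∀ a, B a i = 0 := by
    have h : ∑ a, B a i ^ 2 ≤ 0 := by
      have := hii
      rw [hB] at this
      simpa [Matrix.mul_apply, Matrix.conjTranspose_apply, pow_two] using this
    intro a
    have hnn : ∀ a ∈ Finset.univ, (0:ℝ) ≤ B a i ^ 2 := fun a _ => sq_nonneg _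
    have := (Finset.sum_eq_zero_iff_of_nonneg hnn).mp
      (le_antisymm h (Finset.sum_nonneg hnn)) a (Finset.mem_univ a)
    exact pow_eq_zero_iff (by norm_num) |>.mp this
  rw [hB]
  simp [Matrix.mul_apply, Matrix.conjTranspose_apply, hcol]

/-- If all eigenvalues of a symmetric real matrix `C` lie in `[-1,1]` and its first `k`
diagonal entries are `≥ 1`, then its upper-left `k × k` block is the identity. -/
theorem stmt_0 (n k : ℕ) (hk : k ≤ n) (C : Matrix (Fin n) (Fin n) ℝ)
    (hsymm : C.IsSymm)
    (hspec : spectrum ℝ C ⊆ Set.Icc (-1 : ℝ) 1)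
    (hdiag : ∀ i : Fin n, (i : ℕ) < k → 1 ≤ C i i) :
    ∀ i j : Fin n, (i : ℕ) < k → (j : ℕ) < k →
      C i j = if i = j then (1 : ℝ) else 0 := by
  have hC : C.IsHermitian := by
    rw [Matrix.IsHermitian]
    ext a b
    have := congrFun (congrFun hsymm a) b
    simpa [Matrix.conjTranspose_apply, Matrix.transpose_apply] using this
  have hM : (1 - C).IsHermitian := Matrix.isHermitian_one.sub hC
  have hspecM : spectrum ℝ (1 - C) ⊆ Set.Ici (0:ℝ) := by
    intro μ hμ
    have h1 : (1 : Matrix (Fin n) (Fin n) ℝ) - C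
        = (algebraMap ℝ (Matrix (Fin n) (Fin n) ℝ)) 1 - C := by simp
    rw [h1, ← spectrum.singleton_sub_eq] at hμ
    obtain ⟨a, ha, b, hb, hab⟩ := Set.mem_sub.mp hμ
    obtain ⟨rfl⟩ : a = 1 := Set.mem_singleton_iff.mp ha
    have := (hspec hb).2
    simp only [Set.mem_Ici, ← hab]
    linarith
  have hPSD : (1 - C).PosSemidef := by
    rw [hM.posSemidef_iff_eigenvalues_nonneg]
    intro i
    exact hspecM (hM.eigenvalues_mem_spectrum_real i)
  intro i j hi hj
  have hzero : ∀ a : Fin n, (a : ℕ) < k → ∀ b, (1 - C) a b = 0 := by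
    intro a ha b
    apply aux_entry_zero hPSD _ b
    have := hdiag a ha
    simp only [Matrix.sub_apply, Matrix.one_apply_eq]
    linarith
  have := hzero i hi j
  simp only [Matrix.sub_apply] at this
  rcases eq_or_ne i j with rfl | h
  · rw [if_pos rfl]
    rw [Matrix.one_apply_eq] at this
    linarith
  · rw [if_neg h]
    rw [Matrix.one_apply_ne h] at this
    linarith
end

section
/- Let C be a symmetric n×n real matrix all of whose eigenvalues lie in [-1,1], and suppose the first k diagonal entries of C are each at least 1. Then the upper-left k×k block of C is the identity matrix and the off-diagonal block C_{1:k, k+1:n} is the zero matrix. -/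
open Matrix Pointwise

lemma psd_row_zero {n : ℕ} {M : Matrix (Fin n) (Fin n) ℝ} (hM : M.PosSemidef)
    {i : Fin n} (h : M i i ≤ 0) : ∀ j, M i j = 0 := by
  obtain ⟨B, rfl⟩ : ∃ B : Matrix (Fin n) (Fin n) ℝ, M = Bᴴ * B := by
    open scoped MatrixOrder in exact CStarAlgebra.nonneg_iff_eq_star_mul_self.mp hM.nonneg
  have hii : ∑ l, B l i * B l i ≤ 0 := by
    simpa [Matrix.mul_apply, Matrix.conjTranspose_apply] using h
  have hz : ∀ l, B l i = 0 := by
    intro l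
    have := (Finset.sum_eq_zero_iff_of_nonneg (fun l _ => mul_self_nonneg (B l i))).mp
      (le_antisymm hii (Finset.sum_nonneg fun l _ => mul_self_nonneg (B l i)))
    exact mul_self_eq_zero.mp (this l (Finset.mem_univ l))
  intro j
  simp [Matrix.mul_apply, Matrix.conjTranspose_apply, hz]

/-- If all eigenvalues of a symmetric real matrix `C` lie in `[-1,1]` and its first `k`
diagonal entries are `≥ 1`, then its upper-left `k × k` block is the identity and the
off-diagonal block `C_{1:k, k+1:n}` is zero. -/
theorem stmt_1 (n k : ℕ) (hk : k ≤ n) (C : Matrix (Fin n) (Fin n) ℝ)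
    (hsymm : C.IsSymm)
    (hspec : spectrum ℝ C ⊆ Set.Icc (-1 : ℝ) 1)
    (hdiag : ∀ i : Fin n, (i : ℕ) < k → 1 ≤ C i i) :
    (∀ i j : Fin n, (i : ℕ) < k → (j : ℕ) < k →
      C i j = if i = j then (1 : ℝ) else 0) ∧
    (∀ i j : Fin n, (i : ℕ) < k → k ≤ (j : ℕ) → C i j = 0) := by
  have hherm : C.IsHermitian := by
    rwa [Matrix.IsHermitian, Matrix.conjTranspose_eq_transpose_of_trivial]
  have hMherm : (1 - C).IsHermitian := Matrix.isHermitian_one.sub hherm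
  have hspecM : spectrum ℝ (1 - C) = ({(1 : ℝ)} : Set ℝ) - spectrum ℝ C := by
    have := spectrum.singleton_sub_eq (R := ℝ) C (1 : ℝ)
    rw [_root_.map_one] at this
    exact this.symm
  have hpsd : (1 - C).PosSemidef := by
    rw [hMherm.posSemidef_iff_eigenvalues_nonneg]
    show ∀ i, (0 : ℝ) ≤ hMherm.eigenvalues i
    intro i
    have hmem := hMherm.eigenvalues_mem_spectrum_real i
    rw [hspecM, Set.mem_sub] at hmem
    obtain ⟨x, hx, y, hy, hxy⟩ := hmem
    obtain ⟨hy1, hy2⟩ := hspec hy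
    simp only [Set.mem_singleton_iff] at hx
    subst hx
    linarith [hxy ▸ (by linarith : (0:ℝ) ≤ 1 - y)]
  have key : ∀ i : Fin n, (i : ℕ) < k → ∀ j, (1 - C) i j = 0 := by
    intro i hi
    apply psd_row_zero hpsd
    have : (1 - C) i i = 1 - C i i := by simp [Matrix.sub_apply]
    rw [this]
    linarith [hdiag i hi]
  have hC : ∀ i : Fin n, (i : ℕ) < k → ∀ j, C i j = (1 : Matrix (Fin n) (Fin n) ℝ) i j := by
    intro i hi j
    have := key i hi j
    rw [Matrix.sub_apply] at this
    linarith
  constructor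
  · intro i j hi hj
    rw [hC i hi j, Matrix.one_apply]
  · intro i j hi hj
    rw [hC i hi j, Matrix.one_apply_ne]
    rintro rfl
    omega
end

section
/- Let β, η ∈ [0,1] and define x_u = β + η − 2βη + √((β+η−2βη)² − (β−η)²). Then x_u ≤ 1, with equality if and only if β + η = 1. -/
/-- For `β, η ∈ [0,1]`, the upper edge
`x_u = β + η − 2βη + √((β+η−2βη)² − (β−η)²)` satisfies `x_u ≤ 1`,
with equality iff `β + η = 1`. -/
theorem stmt_6 (β η : ℝ) (hβ : β ∈ Set.Icc (0 : ℝ) 1) (hη : η ∈ Set.Icc (0 : ℝ) 1) :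
    β + η - 2 * β * η + Real.sqrt ((β + η - 2 * β * η) ^ 2 - (β - η) ^ 2) ≤ 1 ∧
    (β + η - 2 * β * η + Real.sqrt ((β + η - 2 * β * η) ^ 2 - (β - η) ^ 2) = 1 ↔
      β + η = 1) := by
  obtain ⟨hβ0, hβ1⟩ := hβ
  obtain ⟨hη0, hη1⟩ := hη
  set s : ℝ := β + η - 2 * β * η with hs
  set D : ℝ := s ^ 2 - (β - η) ^ 2 with hDdef
  have hDnn : 0 ≤ D := by
    have : D = 4 * (β * η * ((1 - β) * (1 - η))) := by rw [hDdef, hs]; ring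
    rw [this]
    nlinarith [mul_nonneg (mul_nonneg hβ0 hη0) (mul_nonneg (by linarith : (0:ℝ) ≤ 1 - β) (by linarith : (0:ℝ) ≤ 1 - η))]
  have h1s : 0 ≤ 1 - s := by
    have : 1 - s = (1 - β) * (1 - η) + β * η := by rw [hs]; ring
    rw [this]
    nlinarith [mul_nonneg hβ0 hη0, mul_nonneg (by linarith : (0:ℝ) ≤ 1 - β) (by linarith : (0:ℝ) ≤ 1 - η)]
  have hkey : D = (1 - s) ^ 2 - (β + η - 1) ^ 2 := by rw [hDdef, hs]; ring
  have hle : Real.sqrt D ≤ 1 - s := by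
    calc Real.sqrt D ≤ Real.sqrt ((1 - s) ^ 2) := by
          apply Real.sqrt_le_sqrt
          nlinarith [sq_nonneg (β + η - 1)]
      _ = 1 - s := by rw [Real.sqrt_sq h1s]
  constructor
  · linarith
  · constructor
    · intro h
      have heq : Real.sqrt D = 1 - s := by linarith
      have : D = (1 - s) ^ 2 := by
        rw [← heq, Real.sq_sqrt hDnn]
      have h0 : (β + η - 1) ^ 2 = 0 := by nlinarith
      have := pow_eq_zero_iff (n := 2) (by norm_num) |>.mp h0
      linarith
    · intro h
      have : D = (1 - s) ^ 2 := by rw [hkey, h]; ring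
      rw [this, Real.sqrt_sq h1s]; linarith
end
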